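/- Let f₁, f₂ be vectors in ℂ^m with f₁ + f₂ = e₁ (the first standard basis vector), and suppose ‖f₁‖² ≥ c² + ‖f₂‖² for some c > 0. Then |⟨f₁, e₁⟩|² ≥ c² + |⟨f₂, e₁⟩|²; in particular ⟨f₁, e₁⟩ ≠ 0. -/

import Mathlib

open scoped InnerProductSpace
set_option autoImplicit false

theorem stmt8 (m : ℕ) (f₁ f₂ : EuclideanSpace ℂ (Fin (m + 1))) (c : ℝ) (hc : 0 < c)
    (hsum : f₁ + f₂ = EuclideanSpace.single 0 1)
    (hnorm : ‖f₁‖ ^ 2 ≥ c ^ 2 + ‖f₂‖ ^ 2) :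
    ‖⟪f₁, EuclideanSpace.single 0 1⟫_ℂ‖ ^ 2 ≥
      c ^ 2 + ‖⟪f₂, EuclideanSpace.single 0 1⟫_ℂ‖ ^ 2 ∧
    ⟪f₁, EuclideanSpace.single 0 1⟫_ℂ ≠ 0 := by
  set e : EuclideanSpace ℂ (Fin (m + 1)) := EuclideanSpace.single 0 1 with he
  set a : ℂ := ⟪f₁, e⟫_ℂ with ha
  set b : ℂ := ⟪f₂, e⟫_ℂ with hb
  have hee : ⟪e, e⟫_ℂ = 1 := by
    simp [he, EuclideanSpace.inner_single_left, EuclideanSpace.single_apply]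
  have hab : a + b = 1 := by
    rw [ha, hb, ← inner_add_left, hsum, hee]
  have hf2 : f₂ = e - f₁ := by
    rw [← hsum]; abel
  have hnorm' : ‖f₂‖ ^ 2 = ‖e‖ ^ 2 - 2 * Complex.re ⟪e, f₁⟫_ℂ + ‖f₁‖ ^ 2 := by
    rw [hf2]
    exact norm_sub_sq (𝕜 := ℂ) e f₁
  have hne : ‖e‖ = 1 := by
    rw [he, EuclideanSpace.norm_single]; simp
  have hrea : Complex.re ⟪e, f₁⟫_ℂ = a.re := by
    rw [ha, ← inner_conj_symm]
    simp only [Complex.conj_re]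
  have hkey : 2 * a.re - 1 ≥ c ^ 2 := by
    rw [hnorm', hne, hrea] at hnorm
    nlinarith [hnorm]
  have hbeq : b = 1 - a := by linear_combination hab
  have habs : ‖a‖ ^ 2 ≥ c ^ 2 + ‖b‖ ^ 2 := by
    rw [hbeq]
    have h1 : ‖a‖ ^ 2 = a.re ^ 2 + a.im ^ 2 := by
      rw [Complex.sq_norm, Complex.normSq_apply]; ring
    have h2 : ‖1 - a‖ ^ 2 = (1 - a.re) ^ 2 + a.im ^ 2 := by
      rw [Complex.sq_norm, Complex.normSq_apply]
      simp [Complex.sub_re, Complex.sub_im]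
      ring
    rw [h1, h2]
    nlinarith [hkey]
  refine ⟨habs, ?_⟩
  intro h0
  rw [h0] at habs
  simp at habs
  nlinarith [sq_nonneg ‖b‖, habs, sq_nonneg c]
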